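/- At the special point K₉ = ((b − 1)/β, (1 − b + β)/β, 0) on the line of mixed cooperator equilibria (which exists in the simplex when b < 1 + β), the characteristic polynomial of the Jacobian satisfies charpoly(J(K₉)) = X² · (X − (ε − 1)); i.e. J(K₉) has the eigenvalue 0 with algebraic multiplicity two and the single negative real eigenvalue ε − 1. -/

import Mathlib

noncomputable section

open Polynomial

/-- Payoff of altruistic punishers. -/
def PiAP (γ x y z : ℝ) : ℝ := x + y - γ * z

/-- Payoff of non-punishing cooperators. -/
def PiNC (x y : ℝ) : ℝ := x + y

/-- Payoff of defectors. -/
def PiD (b β x y : ℝ) : ℝ := (b - β) * x + b * y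

/-- First component of the reduced replicator vector field. -/
def fRep (b β γ ε x y z : ℝ) : ℝ :=
  x * ((1 - x) * (PiAP γ x y z - ε) - y * (PiNC x y - ε) - z * (PiD b β x y - ε))

/-- Second component of the reduced replicator vector field. -/
def gRep (b β γ ε x y z : ℝ) : ℝ :=
  y * ((1 - y) * (PiNC x y - ε) - x * (PiAP γ x y z - ε) - z * (PiD b β x y - ε))

/-- Third component of the reduced replicator vector field. -/
def hRep (b β γ ε x y z : ℝ) : ℝ :=
  z * ((1 - z) * (PiD b β x y - ε) - y * (PiNC x y - ε) - x * (PiAP γ x y z - ε))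

/-- The reduced replicator vector field `F : ℝ³ → ℝ³`. -/
def Fv (b β γ ε : ℝ) (p : ℝ × ℝ × ℝ) : ℝ × ℝ × ℝ :=
  (fRep b β γ ε p.1 p.2.1 p.2.2,
   gRep b β γ ε p.1 p.2.1 p.2.2,
   hRep b β γ ε p.1 p.2.1 p.2.2)

/-- Partial derivative in the first variable. -/
def pd1 (F : ℝ → ℝ → ℝ → ℝ) (p : ℝ × ℝ × ℝ) : ℝ :=
  deriv (fun x => F x p.2.1 p.2.2) p.1

/-- Partial derivative in the second variable. -/
def pd2 (F : ℝ → ℝ → ℝ → ℝ) (p : ℝ × ℝ × ℝ) : ℝ :=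
  deriv (fun y => F p.1 y p.2.2) p.2.1

/-- Partial derivative in the third variable. -/
def pd3 (F : ℝ → ℝ → ℝ → ℝ) (p : ℝ × ℝ × ℝ) : ℝ :=
  deriv (fun z => F p.1 p.2.1 z) p.2.2

/-- The Jacobian matrix of the reduced replicator vector field at `p`. -/
def Jac (b β γ ε : ℝ) (p : ℝ × ℝ × ℝ) : Matrix (Fin 3) (Fin 3) ℝ :=
  !![pd1 (fRep b β γ ε) p, pd2 (fRep b β γ ε) p, pd3 (fRep b β γ ε) p;
     pd1 (gRep b β γ ε) p, pd2 (gRep b β γ ε) p, pd3 (gRep b β γ ε) p;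
     pd1 (hRep b β γ ε) p, pd2 (hRep b β γ ε) p, pd3 (hRep b β γ ε) p]


lemma deriv_cubic (c3 c2 c1 c0 : ℝ) (F : ℝ → ℝ)
    (hF : ∀ t, F t = c3 * t ^ 3 + c2 * t ^ 2 + c1 * t + c0) (x : ℝ) :
    deriv F x = 3 * c3 * x ^ 2 + 2 * c2 * x + c1 := by
  have hFe : F = fun t => c3 * t ^ 3 + c2 * t ^ 2 + c1 * t + c0 := funext hF
  subst hFe
  have h1 := (hasDerivAt_pow 3 x).const_mul c3
  have h2 := (hasDerivAt_pow 2 x).const_mul c2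
  have h3 := (hasDerivAt_id x).const_mul c1
  have h := ((h1.add h2).add (h3.add_const c0))
  have h' : HasDerivAt (fun t : ℝ => c3 * t ^ 3 + c2 * t ^ 2 + c1 * t + c0)
      (3 * c3 * x ^ 2 + 2 * c2 * x + c1) x := by
    convert h using 1
    · rfl
    · rfl
    · funext t; simp only [Pi.add_apply, id_eq]; ring
    · push_cast; ring
  exact h'.deriv

theorem K9_charpoly (b β γ ε : ℝ)
    (hb : 1 < b) (hβ : 0 < β) (hγ : 0 < γ) (hε : ε < 1) :
    (Jac b β γ ε ((b - 1) / β, (1 - b + β) / β, 0)).charpoly =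
      X ^ 2 * (X - C (ε - 1)) := by
  have hβ0 : β ≠ 0 := ne_of_gt hβ
  obtain ⟨u, hu⟩ : ∃ x : ℝ, x = (b - 1) / β := ⟨_, rfl⟩
  obtain ⟨v, hvdef⟩ : ∃ x : ℝ, x = (1 - b + β) / β := ⟨_, rfl⟩
  rw [show ((b - 1) / β, (1 - b + β) / β, (0:ℝ)) = (u, v, 0) by rw [hu, hvdef]]
  have hv : v = 1 - u := by rw [hvdef, hu]; field_simp; ring
  have hbv : (b - β) * u + b * v = 1 := by rw [hu, hvdef]; field_simp; ring
  have e11 : pd1 (fRep b β γ ε) (u, v, 0) = u * (ε - 1) := by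
    have h := deriv_cubic (-1) (1 - 2*v + ε) (v - ε - v^2 + v*ε) 0
      (fun x => fRep b β γ ε x v 0)
      (fun t => by simp only [fRep, PiAP, PiNC, PiD]; ring) u
    rw [show pd1 (fRep b β γ ε) (u, v, 0) = deriv (fun x => fRep b β γ ε x v 0) u from rfl, h,
      hv]; ring
  have e12 : pd2 (fRep b β γ ε) (u, v, 0) = u * (ε - 1) := by
    have h := deriv_cubic 0 (-u) (u * (1 - 2*u + ε)) (u * (1-u) * (u - ε))
      (fun y => fRep b β γ ε u y 0)
      (fun t => by simp only [fRep, PiAP, PiNC, PiD]; ring) v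
    rw [show pd2 (fRep b β γ ε) (u, v, 0) = deriv (fun y => fRep b β γ ε u y 0) v from rfl, h,
      hv]; ring
  have e13 : pd3 (fRep b β γ ε) (u, v, 0) = u * (ε - 1 - γ * (1 - u)) := by
    have h := deriv_cubic 0 0 (u * (-(1-u)*γ - ((b-β)*u + b*v - ε)))
      (u * ((1-u) * (u+v-ε) - v * (u+v-ε)))
      (fun z => fRep b β γ ε u v z)
      (fun t => by simp only [fRep, PiAP, PiNC, PiD]; ring) 0
    rw [show pd3 (fRep b β γ ε) (u, v, 0) = deriv (fun z => fRep b β γ ε u v z) 0 from rfl, h]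
    linear_combination (-u) * hbv
  have e21 : pd1 (gRep b β γ ε) (u, v, 0) = (1 - u) * (ε - 1) := by
    have h := deriv_cubic 0 (-v) (v * (1 - 2*v + ε)) (v * (1-v) * (v - ε))
      (fun x => gRep b β γ ε x v 0)
      (fun t => by simp only [gRep, PiAP, PiNC, PiD]; ring) u
    rw [show pd1 (gRep b β γ ε) (u, v, 0) = deriv (fun x => gRep b β γ ε x v 0) u from rfl, h,
      hv]; ring
  have e22 : pd2 (gRep b β γ ε) (u, v, 0) = (1 - u) * (ε - 1) := by
    have h := deriv_cubic (-1) (1 - 2*u + ε) (u - ε - u^2 + u*ε) 0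
      (fun y => gRep b β γ ε u y 0)
      (fun t => by simp only [gRep, PiAP, PiNC, PiD]; ring) v
    rw [show pd2 (gRep b β γ ε) (u, v, 0) = deriv (fun y => gRep b β γ ε u y 0) v from rfl, h,
      hv]; ring
  have e23 : pd3 (gRep b β γ ε) (u, v, 0) = (1 - u) * (γ * u - 1 + ε) := by
    have h := deriv_cubic 0 0 (v * (u*γ - ((b-β)*u + b*v - ε)))
      (v * ((1-v) * (u+v-ε) - u * (u+v-ε)))
      (fun z => gRep b β γ ε u v z)
      (fun t => by simp only [gRep, PiAP, PiNC, PiD]; ring) 0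
    rw [show pd3 (gRep b β γ ε) (u, v, 0) = deriv (fun z => gRep b β γ ε u v z) 0 from rfl, h]
    linear_combination (-v) * hbv + (γ*u - 1 + ε) * hv
  have e31 : pd1 (hRep b β γ ε) (u, v, 0) = 0 := by
    have h := deriv_cubic 0 0 0 0 (fun x => hRep b β γ ε x v 0)
      (fun t => by simp only [hRep, PiAP, PiNC, PiD]; ring) u
    rw [show pd1 (hRep b β γ ε) (u, v, 0) = deriv (fun x => hRep b β γ ε x v 0) u from rfl, h]
    ring
  have e32 : pd2 (hRep b β γ ε) (u, v, 0) = 0 := by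
    have h := deriv_cubic 0 0 0 0 (fun y => hRep b β γ ε u y 0)
      (fun t => by simp only [hRep, PiAP, PiNC, PiD]; ring) v
    rw [show pd2 (hRep b β γ ε) (u, v, 0) = deriv (fun y => hRep b β γ ε u y 0) v from rfl, h]
    ring
  have e33 : pd3 (hRep b β γ ε) (u, v, 0) = 0 := by
    have h := deriv_cubic 0 (u*γ - ((b-β)*u + b*v - ε))
      ((b-β)*u + b*v - ε - (u+v) * (u+v-ε)) 0
      (fun z => hRep b β γ ε u v z)
      (fun t => by simp only [hRep, PiAP, PiNC, PiD]; ring) 0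
    rw [show pd3 (hRep b β γ ε) (u, v, 0) = deriv (fun z => hRep b β γ ε u v z) 0 from rfl, h]
    linear_combination hbv - (u + v + 1 - ε) * hv
  have hJ : Jac b β γ ε (u, v, 0) =
      !![u * (ε - 1), u * (ε - 1), u * (ε - 1 - γ * (1 - u));
         (1 - u) * (ε - 1), (1 - u) * (ε - 1), (1 - u) * (γ * u - 1 + ε);
         0, 0, 0] := by
    rw [Jac, e11, e12, e13, e21, e22, e23, e31, e32, e33]
  rw [hJ, Matrix.charpoly, Matrix.det_fin_three]
  simp [Matrix.charmatrix, Matrix.scalar, map_mul, map_sub, map_add, map_one]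
  ring
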